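/- Nonnegativity of redundancy: Red(Y; F, B) = I_P(Y; B) − Uni(Y; B|F) ≥ 0, i.e., Uni(Y; B|F) ≤ I_P(Y; B). -/
import Mathlib


open scoped BigOperators

section PID

/-- A joint probability distribution on a product of three finite types,
represented as a nonnegative function summing to one. -/
def IsDist3 {Y F B : Type*} [Fintype Y] [Fintype F] [Fintype B]
    (P : Y → F → B → ℝ) : Prop :=
  (∀ y f b, 0 ≤ P y f b) ∧ ∑ y, ∑ f, ∑ b, P y f b = 1

/-- Marginal on (Y, F). -/
def margYF {Y F B : Type*} [Fintype B] (P : Y → F → B → ℝ) (y : Y) (f : F) : ℝ :=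
  ∑ b, P y f b

/-- Marginal on (Y, B). -/
def margYB {Y F B : Type*} [Fintype F] (P : Y → F → B → ℝ) (y : Y) (b : B) : ℝ :=
  ∑ f, P y f b

/-- Marginal on (F, B). -/
def margFB {Y F B : Type*} [Fintype Y] (P : Y → F → B → ℝ) (f : F) (b : B) : ℝ :=
  ∑ y, P y f b

/-- Marginal on Y. -/
def margY {Y F B : Type*} [Fintype F] [Fintype B] (P : Y → F → B → ℝ) (y : Y) : ℝ :=
  ∑ f, ∑ b, P y f b

/-- Marginal on F. -/
def margF {Y F B : Type*} [Fintype Y] [Fintype B] (P : Y → F → B → ℝ) (f : F) : ℝ :=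
  ∑ y, ∑ b, P y f b

/-- Marginal on B. -/
def margB {Y F B : Type*} [Fintype Y] [Fintype F] (P : Y → F → B → ℝ) (b : B) : ℝ :=
  ∑ y, ∑ f, P y f b

/-- Conditional mutual information I_Q(Y ; B | F) for a joint distribution `Q`
on `Y × F × B` (natural log; `0 log 0 = 0` conventions via `Real.log 0 = 0`
and division-by-zero conventions). -/
noncomputable def condMI {Y F B : Type*} [Fintype Y] [Fintype F] [Fintype B]
    (Q : Y → F → B → ℝ) : ℝ :=
  ∑ y, ∑ f, ∑ b, Q y f b *
    Real.log ((Q y f b * margF Q f) / (margYF Q y f * margFB Q f b))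

/-- Mutual information I_P(Y ; B). -/
noncomputable def mutYB {Y F B : Type*} [Fintype Y] [Fintype F] [Fintype B]
    (P : Y → F → B → ℝ) : ℝ :=
  ∑ y, ∑ b, margYB P y b * Real.log (margYB P y b / (margY P y * margB P b))

/-- Mutual information I_P(Y ; F). -/
noncomputable def mutYF {Y F B : Type*} [Fintype Y] [Fintype F] [Fintype B]
    (P : Y → F → B → ℝ) : ℝ :=
  ∑ y, ∑ f, margYF P y f * Real.log (margYF P y f / (margY P y * margF P f))

/-- Mutual information I_P(Y ; (F, B)). -/
noncomputable def mutYFB {Y F B : Type*} [Fintype Y] [Fintype F] [Fintype B]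
    (P : Y → F → B → ℝ) : ℝ :=
  ∑ y, ∑ f, ∑ b, P y f b * Real.log (P y f b / (margY P y * margFB P f b))

/-- The feasible set Δ_P of joint distributions matching the (Y,F) and (Y,B)
marginals of `P`. -/
def Delta {Y F B : Type*} [Fintype Y] [Fintype F] [Fintype B]
    (P : Y → F → B → ℝ) : Set (Y → F → B → ℝ) :=
  {Q | IsDist3 Q ∧ (∀ y f, margYF Q y f = margYF P y f) ∧
      (∀ y b, margYB Q y b = margYB P y b)}

/-- Unique information Uni(Y ; B | F) (Bertschinger et al.):
the infimum of I_Q(Y ; B | F) over Q ∈ Δ_P. -/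
noncomputable def uni {Y F B : Type*} [Fintype Y] [Fintype F] [Fintype B]
    (P : Y → F → B → ℝ) : ℝ :=
  sInf (condMI '' Delta P)

/-- A matrix with entries in [0,1] whose rows each sum to 1. -/
def RowStochastic {F B : Type*} [Fintype B] (T : F → B → ℝ) : Prop :=
  (∀ f b, 0 ≤ T f b ∧ T f b ≤ 1) ∧ ∀ f, ∑ b, T f b = 1

end PID

section Proof
open Finset

set_option linter.unusedSectionVars false

lemma pt_gibbs (a b : ℝ) (ha : 0 ≤ a) (hb : 0 ≤ b) (h : 0 < a → 0 < b) :
    a - b ≤ a * Real.log (a / b) := by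
  rcases eq_or_lt_of_le ha with h0 | h0
  · simp [← h0]; linarith
  · have hbp := h h0
    have hl := Real.log_le_sub_one_of_pos (show 0 < b / a by positivity)
    have hlog : Real.log (a / b) = - Real.log (b / a) := by
      rw [← Real.log_inv]; congr 1; rw [inv_div]
    have h2 : a * Real.log (b / a) ≤ a * (b / a - 1) :=
      mul_le_mul_of_nonneg_left hl h0.le
    have h3 : a * (b / a - 1) = b - a := by field_simp
    rw [hlog]; nlinarith

variable {Y F B : Type*} [Fintype Y] [Fintype F] [Fintype B]

/-- The conditional-independence coupling witness. -/
noncomputable def Qw (P : Y → F → B → ℝ) (y : Y) (f : F) (b : B) : ℝ :=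
  margYF P y f * margYB P y b / margY P y

lemma margYF_nonneg (P : Y → F → B → ℝ) (hnn : ∀ y f b, 0 ≤ P y f b) (y : Y) (f : F) :
    0 ≤ margYF P y f :=
  Finset.sum_nonneg fun b _ => hnn y f b

lemma margYB_nonneg (P : Y → F → B → ℝ) (hnn : ∀ y f b, 0 ≤ P y f b) (y : Y) (b : B) :
    0 ≤ margYB P y b :=
  Finset.sum_nonneg fun f _ => hnn y f b

lemma margFB_nonneg (P : Y → F → B → ℝ) (hnn : ∀ y f b, 0 ≤ P y f b) (f : F) (b : B) :
    0 ≤ margFB P f b :=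
  Finset.sum_nonneg fun y _ => hnn y f b

lemma margY_nonneg (P : Y → F → B → ℝ) (hnn : ∀ y f b, 0 ≤ P y f b) (y : Y) :
    0 ≤ margY P y :=
  Finset.sum_nonneg fun f _ => margYF_nonneg P hnn y f

lemma sum_margYB (P : Y → F → B → ℝ) (y : Y) : ∑ b, margYB P y b = margY P y := by
  unfold margYB margY; rw [Finset.sum_comm]

lemma sum_margYF (P : Y → F → B → ℝ) (y : Y) : ∑ f, margYF P y f = margY P y := rfl

lemma margYF_le_margY (P : Y → F → B → ℝ) (hnn : ∀ y f b, 0 ≤ P y f b) (y : Y) (f : F) :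
    margYF P y f ≤ margY P y :=
  Finset.single_le_sum (fun f _ => margYF_nonneg P hnn y f) (mem_univ f)

lemma margYB_le_margY (P : Y → F → B → ℝ) (hnn : ∀ y f b, 0 ≤ P y f b) (y : Y) (b : B) :
    margYB P y b ≤ margY P y := by
  rw [← sum_margYB]
  exact Finset.single_le_sum (fun b _ => margYB_nonneg P hnn y b) (mem_univ b)

lemma margF_eq (P : Y → F → B → ℝ) (f : F) : margF P f = ∑ y, margYF P y f := rfl

lemma margB_eq (P : Y → F → B → ℝ) (b : B) : margB P b = ∑ y, margYB P y b := rfl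

lemma margF_eq_sum_FB (P : Y → F → B → ℝ) (f : F) : margF P f = ∑ b, margFB P f b := by
  unfold margF margFB; rw [Finset.sum_comm]

lemma margB_eq_sum_FB (P : Y → F → B → ℝ) (b : B) : margB P b = ∑ f, margFB P f b := by
  unfold margB margFB; rw [Finset.sum_comm]

lemma Qw_nonneg (P : Y → F → B → ℝ) (hnn : ∀ y f b, 0 ≤ P y f b) (y : Y) (f : F) (b : B) :
    0 ≤ Qw P y f b :=
  div_nonneg (mul_nonneg (margYF_nonneg P hnn y f) (margYB_nonneg P hnn y b))
    (margY_nonneg P hnn y)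

lemma margYF_Qw (P : Y → F → B → ℝ) (hnn : ∀ y f b, 0 ≤ P y f b) (y : Y) (f : F) :
    margYF (Qw P) y f = margYF P y f := by
  show ∑ b, Qw P y f b = margYF P y f
  unfold Qw
  have h : ∑ b, margYF P y f * margYB P y b / margY P y
      = margYF P y f * (∑ b, margYB P y b) / margY P y := by
    rw [Finset.mul_sum, Finset.sum_div]
  rw [h, sum_margYB]
  by_cases hy : margY P y = 0
  · have h1 : margYF P y f = 0 :=
      le_antisymm (hy ▸ margYF_le_margY P hnn y f) (margYF_nonneg P hnn y f)
    simp [h1]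
  · rw [mul_div_assoc, div_self hy, mul_one]

lemma margYB_Qw (P : Y → F → B → ℝ) (hnn : ∀ y f b, 0 ≤ P y f b) (y : Y) (b : B) :
    margYB (Qw P) y b = margYB P y b := by
  show ∑ f, Qw P y f b = margYB P y b
  unfold Qw
  have h : ∑ f, margYF P y f * margYB P y b / margY P y
      = (∑ f, margYF P y f) * margYB P y b / margY P y := by
    rw [Finset.sum_mul, Finset.sum_div]
  rw [h, sum_margYF]
  by_cases hy : margY P y = 0
  · have h1 : margYB P y b = 0 :=
      le_antisymm (hy ▸ margYB_le_margY P hnn y b) (margYB_nonneg P hnn y b)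
    simp [h1]
  · rw [mul_comm, mul_div_assoc, div_self hy, mul_one]

lemma margF_Qw (P : Y → F → B → ℝ) (hnn : ∀ y f b, 0 ≤ P y f b) (f : F) :
    margF (Qw P) f = margF P f := by
  rw [margF_eq, margF_eq]
  exact Finset.sum_congr rfl fun y _ => margYF_Qw P hnn y f

lemma margB_Qw (P : Y → F → B → ℝ) (hnn : ∀ y f b, 0 ≤ P y f b) (b : B) :
    margB (Qw P) b = margB P b := by
  rw [margB_eq, margB_eq]
  exact Finset.sum_congr rfl fun y _ => margYB_Qw P hnn y b

lemma Qw_total (P : Y → F → B → ℝ) (hP : IsDist3 P) :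
    ∑ y, ∑ f, ∑ b, Qw P y f b = 1 := by
  have h : ∀ y f, ∑ b, Qw P y f b = margYF P y f := fun y f => margYF_Qw P hP.1 y f
  calc ∑ y, ∑ f, ∑ b, Qw P y f b = ∑ y, ∑ f, margYF P y f :=
        Finset.sum_congr rfl fun y _ => Finset.sum_congr rfl fun f _ => h y f
    _ = ∑ y, ∑ f, ∑ b, P y f b := rfl
    _ = 1 := hP.2

lemma Qw_mem_Delta (P : Y → F → B → ℝ) (hP : IsDist3 P) : Qw P ∈ Delta P :=
  ⟨⟨Qw_nonneg P hP.1, Qw_total P hP⟩,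
    fun y f => margYF_Qw P hP.1 y f, fun y b => margYB_Qw P hP.1 y b⟩

lemma sum_r_eq_one (Q : Y → F → B → ℝ) (hQ : IsDist3 Q) :
    ∑ y, ∑ f, ∑ b, margYF Q y f * margFB Q f b / margF Q f = 1 := by
  rw [Finset.sum_comm]
  have hf : ∀ f : F, ∑ y, ∑ b, margYF Q y f * margFB Q f b / margF Q f
      = margF Q f := by
    intro f
    have h1 : ∑ y, ∑ b, margYF Q y f * margFB Q f b / margF Q f
        = (∑ y, ∑ b, margYF Q y f * margFB Q f b) / margF Q f := by
      rw [Finset.sum_div]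
      exact Finset.sum_congr rfl fun y _ => by rw [Finset.sum_div]
    have h2 : ∑ y, ∑ b, margYF Q y f * margFB Q f b
        = (∑ y, margYF Q y f) * (∑ b, margFB Q f b) := by
      rw [Finset.sum_mul_sum]
    rw [h1, h2, ← margF_eq, ← margF_eq_sum_FB]
    by_cases hF : margF Q f = 0
    · simp [hF]
    · field_simp
  calc ∑ f, ∑ y, ∑ b, margYF Q y f * margFB Q f b / margF Q f
      = ∑ f, margF Q f := Finset.sum_congr rfl fun f _ => hf f
    _ = ∑ f, ∑ y, ∑ b, Q y f b := rfl
    _ = 1 := by rw [Finset.sum_comm]; exact hQ.2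

lemma condMI_nonneg (Q : Y → F → B → ℝ) (hQ : IsDist3 Q) : 0 ≤ condMI Q := by
  have hnn := hQ.1
  have key : ∑ y, ∑ f, ∑ b, (Q y f b - margYF Q y f * margFB Q f b / margF Q f)
      ≤ condMI Q := by
    unfold condMI
    refine Finset.sum_le_sum fun y _ => Finset.sum_le_sum fun f _ =>
      Finset.sum_le_sum fun b _ => ?_
    have harg : Q y f b * margF Q f / (margYF Q y f * margFB Q f b)
        = Q y f b / (margYF Q y f * margFB Q f b / margF Q f) :=
      (div_div_eq_mul_div _ _ _).symm
    rw [harg]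
    refine pt_gibbs _ _ (hnn y f b) (div_nonneg (mul_nonneg (margYF_nonneg Q hnn y f)
      (margFB_nonneg Q hnn f b)) ?_) ?_
    · rw [margF_eq]
      exact Finset.sum_nonneg fun y _ => margYF_nonneg Q hnn y f
    · intro hq
      have hYF : 0 < margYF Q y f :=
        lt_of_lt_of_le hq (Finset.single_le_sum (fun b _ => hnn y f b) (mem_univ b))
      have hFB : 0 < margFB Q f b :=
        lt_of_lt_of_le hq (Finset.single_le_sum (fun y _ => hnn y f b) (mem_univ y))
      have hF : 0 < margF Q f := by
        rw [margF_eq]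
        exact lt_of_lt_of_le hYF (Finset.single_le_sum
          (fun y _ => margYF_nonneg Q hnn y f) (mem_univ y))
      positivity
  have hsub : ∑ y, ∑ f, ∑ b, (Q y f b - margYF Q y f * margFB Q f b / margF Q f)
      = (∑ y, ∑ f, ∑ b, Q y f b)
        - ∑ y, ∑ f, ∑ b, margYF Q y f * margFB Q f b / margF Q f := by
    rw [← Finset.sum_sub_distrib]
    refine Finset.sum_congr rfl fun y _ => ?_
    rw [← Finset.sum_sub_distrib]
    exact Finset.sum_congr rfl fun f _ => by rw [← Finset.sum_sub_distrib]
  rw [hsub, hQ.2, sum_r_eq_one Q hQ] at key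
  linarith

end Proof

section Proof2
open Finset

variable {Y F B : Type*} [Fintype Y] [Fintype F] [Fintype B]

/-- I_Q(F;B) for the witness coupling. -/
noncomputable def IFB (P : Y → F → B → ℝ) : ℝ :=
  ∑ f, ∑ b, margFB (Qw P) f b *
    Real.log (margFB (Qw P) f b / (margF P f * margB P b))

lemma sum_margF_eq_one (P : Y → F → B → ℝ) (hP : IsDist3 P) :
    ∑ f, margF P f = 1 := by
  calc ∑ f, margF P f = ∑ f, ∑ y, ∑ b, P y f b := rfl
    _ = 1 := by rw [Finset.sum_comm]; exact hP.2

lemma sum_margB_eq_one (P : Y → F → B → ℝ) (hP : IsDist3 P) :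
    ∑ b, margB P b = 1 := by
  have h : ∀ y, ∑ b, margYB P y b = margY P y := sum_margYB P
  calc ∑ b, margB P b = ∑ b, ∑ y, margYB P y b :=
        Finset.sum_congr rfl fun b _ => margB_eq P b
    _ = ∑ y, ∑ b, margYB P y b := Finset.sum_comm
    _ = ∑ y, margY P y := Finset.sum_congr rfl fun y _ => h y
    _ = 1 := hP.2

lemma IFB_nonneg (P : Y → F → B → ℝ) (hP : IsDist3 P) : 0 ≤ IFB P := by
  have hnn := hP.1
  have hQ : IsDist3 (Qw P) := (Qw_mem_Delta P hP).1
  have hQnn := hQ.1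
  have key : ∑ f, ∑ b, (margFB (Qw P) f b - margF P f * margB P b) ≤ IFB P := by
    unfold IFB
    refine Finset.sum_le_sum fun f _ => Finset.sum_le_sum fun b _ => ?_
    refine pt_gibbs _ _ (margFB_nonneg _ hQnn f b)
      (mul_nonneg (Finset.sum_nonneg fun y _ => margYF_nonneg P hnn y f)
        (Finset.sum_nonneg fun y _ => margYB_nonneg P hnn y b)) ?_
    intro hpos
    have hF : 0 < margF P f := by
      rw [← margF_Qw P hnn, margF_eq_sum_FB]
      exact lt_of_lt_of_le hpos (Finset.single_le_sum
        (fun b _ => margFB_nonneg _ hQnn f b) (mem_univ b))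
    have hB : 0 < margB P b := by
      rw [← margB_Qw P hnn, margB_eq_sum_FB]
      exact lt_of_lt_of_le hpos (Finset.single_le_sum
        (fun f _ => margFB_nonneg _ hQnn f b) (mem_univ f))
    exact mul_pos hF hB
  have h1 : ∑ f, ∑ b, margFB (Qw P) f b = 1 := by
    have : ∀ f, ∑ b, margFB (Qw P) f b = margF (Qw P) f :=
      fun f => (margF_eq_sum_FB (Qw P) f).symm
    calc ∑ f, ∑ b, margFB (Qw P) f b = ∑ f, margF (Qw P) f :=
          Finset.sum_congr rfl fun f _ => this f
      _ = ∑ f, margF P f := Finset.sum_congr rfl fun f _ => margF_Qw P hnn f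
      _ = 1 := sum_margF_eq_one P hP
  have h2 : ∑ f, ∑ b, margF P f * margB P b = 1 := by
    rw [← Finset.sum_mul_sum, sum_margF_eq_one P hP, sum_margB_eq_one P hP, one_mul]
  have hsub : ∑ f, ∑ b, (margFB (Qw P) f b - margF P f * margB P b)
      = (∑ f, ∑ b, margFB (Qw P) f b) - ∑ f, ∑ b, margF P f * margB P b := by
    rw [← Finset.sum_sub_distrib]
    exact Finset.sum_congr rfl fun f _ => by rw [← Finset.sum_sub_distrib]
  rw [hsub, h1, h2] at key
  linarith

lemma term_eq (P : Y → F → B → ℝ) (hnn : ∀ y f b, 0 ≤ P y f b) (y : Y) (f : F) (b : B) :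
    Qw P y f b * Real.log (margYB P y b / (margY P y * margB P b))
    = Qw P y f b * Real.log ((Qw P y f b * margF (Qw P) f)
        / (margYF (Qw P) y f * margFB (Qw P) f b))
      + Qw P y f b * Real.log (margFB (Qw P) f b / (margF P f * margB P b)) := by
  by_cases hq : Qw P y f b = 0
  · simp [hq]
  have hqpos : 0 < Qw P y f b := lt_of_le_of_ne (Qw_nonneg P hnn y f b) (Ne.symm hq)
  have hY : 0 < margY P y := by
    rcases eq_or_lt_of_le (margY_nonneg P hnn y) with h | h
    · exfalso; apply hq; unfold Qw; rw [← h, div_zero]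
    · exact h
  have hnum : 0 < margYF P y f * margYB P y b := by
    have : margYF P y f * margYB P y b = Qw P y f b * margY P y := by
      unfold Qw; field_simp
    rw [this]; positivity
  have hYF : 0 < margYF P y f :=
    lt_of_le_of_ne (margYF_nonneg P hnn y f)
      (by rintro h; rw [← h, zero_mul] at hnum; exact lt_irrefl 0 hnum)
  have hYB : 0 < margYB P y b :=
    lt_of_le_of_ne (margYB_nonneg P hnn y b)
      (by rintro h; rw [← h, mul_zero] at hnum; exact lt_irrefl 0 hnum)
  have hF : 0 < margF P f := by
    rw [margF_eq]
    exact lt_of_lt_of_le hYF (Finset.single_le_sum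
      (fun y _ => margYF_nonneg P hnn y f) (mem_univ y))
  have hB : 0 < margB P b := by
    rw [margB_eq]
    exact lt_of_lt_of_le hYB (Finset.single_le_sum
      (fun y _ => margYB_nonneg P hnn y b) (mem_univ y))
  have hFB : 0 < margFB (Qw P) f b :=
    lt_of_lt_of_le hqpos (Finset.single_le_sum
      (fun y _ => Qw_nonneg P hnn y f b) (mem_univ y))
  rw [margF_Qw P hnn, margYF_Qw P hnn]
  have e1 : Real.log (margYB P y b / (margY P y * margB P b))
      = Real.log (margYB P y b) - (Real.log (margY P y) + Real.log (margB P b)) := by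
    rw [Real.log_div hYB.ne' (by positivity), Real.log_mul hY.ne' hB.ne']
  have elogq : Real.log (Qw P y f b)
      = Real.log (margYF P y f) + Real.log (margYB P y b) - Real.log (margY P y) := by
    unfold Qw
    rw [Real.log_div (by positivity) hY.ne', Real.log_mul hYF.ne' hYB.ne']
  have e2 : Real.log ((Qw P y f b * margF P f) / (margYF P y f * margFB (Qw P) f b))
      = Real.log (Qw P y f b) + Real.log (margF P f)
        - (Real.log (margYF P y f) + Real.log (margFB (Qw P) f b)) := by
    rw [Real.log_div (by positivity) (by positivity),
      Real.log_mul hqpos.ne' hF.ne', Real.log_mul hYF.ne' hFB.ne']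
  have e3 : Real.log (margFB (Qw P) f b / (margF P f * margB P b))
      = Real.log (margFB (Qw P) f b) - (Real.log (margF P f) + Real.log (margB P b)) := by
    rw [Real.log_div hFB.ne' (by positivity), Real.log_mul hF.ne' hB.ne']
  rw [e1, e2, e3, elogq]; ring

lemma key_decomp (P : Y → F → B → ℝ) (hP : IsDist3 P) :
    mutYB P = condMI (Qw P) + IFB P := by
  have hnn := hP.1
  have hmut : mutYB P = ∑ y, ∑ f, ∑ b, Qw P y f b *
      Real.log (margYB P y b / (margY P y * margB P b)) := by
    unfold mutYB
    refine Finset.sum_congr rfl fun y _ => ?_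
    trans (∑ b, ∑ f, Qw P y f b *
        Real.log (margYB P y b / (margY P y * margB P b)))
    · refine Finset.sum_congr rfl fun b _ => ?_
      rw [← Finset.sum_mul]
      congr 1
      exact (margYB_Qw P hnn y b).symm
    · exact Finset.sum_comm
  have hifb : IFB P = ∑ y, ∑ f, ∑ b, Qw P y f b *
      Real.log (margFB (Qw P) f b / (margF P f * margB P b)) := by
    unfold IFB
    trans (∑ f, ∑ b, ∑ y, Qw P y f b *
        Real.log (margFB (Qw P) f b / (margF P f * margB P b)))
    · refine Finset.sum_congr rfl fun f _ => Finset.sum_congr rfl fun b _ => ?_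
      rw [← Finset.sum_mul]
      rfl
    · trans (∑ f, ∑ y, ∑ b, Qw P y f b *
          Real.log (margFB (Qw P) f b / (margF P f * margB P b)))
      · exact Finset.sum_congr rfl fun f _ => Finset.sum_comm
      · exact Finset.sum_comm
  have hsum : condMI (Qw P) + (∑ y, ∑ f, ∑ b, Qw P y f b *
      Real.log (margFB (Qw P) f b / (margF P f * margB P b)))
      = ∑ y, ∑ f, ∑ b, (Qw P y f b * Real.log ((Qw P y f b * margF (Qw P) f)
          / (margYF (Qw P) y f * margFB (Qw P) f b))
        + Qw P y f b * Real.log (margFB (Qw P) f b / (margF P f * margB P b))) := by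
    unfold condMI
    rw [← Finset.sum_add_distrib]
    refine Finset.sum_congr rfl fun y _ => ?_
    rw [← Finset.sum_add_distrib]
    refine Finset.sum_congr rfl fun f _ => ?_
    rw [← Finset.sum_add_distrib]
  rw [hmut, hifb, hsum]
  exact Finset.sum_congr rfl fun y _ => Finset.sum_congr rfl fun f _ =>
    Finset.sum_congr rfl fun b _ => term_eq P hnn y f b

end Proof2

/-- nonnegativity of redundancy:
Red(Y;F,B) = I_P(Y;B) − Uni(Y;B|F) ≥ 0. -/
theorem stmt13 {Y F B : Type*} [Fintype Y] [Fintype F] [Fintype B]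
    (P : Y → F → B → ℝ) (hP : IsDist3 P) :
    0 ≤ mutYB P - uni P := by
  have hmem : condMI (Qw P) ∈ condMI '' Delta P := ⟨Qw P, Qw_mem_Delta P hP, rfl⟩
  have hbdd : BddBelow (condMI '' Delta P) := by
    refine ⟨0, fun x hx => ?_⟩
    obtain ⟨Q, hQ, rfl⟩ := hx
    exact condMI_nonneg Q hQ.1
  have h1 : uni P ≤ condMI (Qw P) := csInf_le hbdd hmem
  have h2 : condMI (Qw P) ≤ mutYB P := by
    rw [key_decomp P hP]
    linarith [IFB_nonneg P hP]
  linarith
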